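/- Let 0 < q < 1, λ > 0, and let F : [-λ/2, λ/2] → ℝ be C¹ with |F'| bounded by K on a closed subinterval I ⊂ (-λ/2, λ/2) and |F'| integrable against t ↦ (y+t)^{q-2} away from the pole. Then the function z ↦ ∫_{-z}^{λ/2} q·(z+t)^{q-1}·F'(t) dt is continuous on the interior of I; more precisely, for x < y in I with y - x small, the difference of the integrals at x and y is O(|x - y|^{q/2}). -/

import Mathlib

open intervalIntegral

private lemma stmt15_mvt {q : ℝ} (hq1 : q < 1) {u v : ℝ} (hu : 0 < u) (huv : u ≤ v) :
    u ^ (q-1) - v ^ (q-1) ≤ (1-q) * u ^ (q-2) * (v - u) ∧ 0 ≤ u ^ (q-1) - v ^ (q-1) := by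
  have hv : 0 < v := lt_of_lt_of_le hu huv
  constructor
  · rcases eq_or_lt_of_le huv with h | h
    · subst h; simp
    · obtain ⟨ξ, hξ, hξ'⟩ := exists_hasDerivAt_eq_slope (fun s => s ^ (q-1))
        (fun s => (q-1) * s ^ (q-2)) h
        (fun s hs => (Real.continuousAt_rpow_const s (q-1)
          (Or.inl (by intro h0; rw [h0] at hs; exact absurd hs.1 (not_le.mpr hu)))).continuousWithinAt)
        (fun s hs => by
          have hs0 : s ≠ 0 := ne_of_gt (lt_trans hu hs.1)
          simpa [show q-1-1 = q-2 by ring] using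
            Real.hasDerivAt_rpow_const (p := q-1) (Or.inl hs0))
      rw [eq_div_iff (by linarith : v - u ≠ 0)] at hξ'
      have hb : ξ ^ (q-2) ≤ u ^ (q-2) :=
        Real.rpow_le_rpow_of_nonpos hu hξ.1.le (by linarith)
      have e : u ^ (q-1) - v ^ (q-1) = (1-q) * ξ ^ (q-2) * (v - u) := by
        linear_combination hξ'
      rw [e]
      apply mul_le_mul_of_nonneg_right (mul_le_mul_of_nonneg_left hb (by linarith)) (by linarith)
  · have := Real.rpow_le_rpow_of_nonpos hu huv (by linarith : q - 1 ≤ 0)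
    linarith

set_option maxHeartbeats 2000000 in
theorem stmt_15 (q lam : ℝ) (hq0 : 0 < q) (hq1 : q < 1) (hlam : 0 < lam)
    (a b : ℝ) (hab : a ≤ b) (ha : -lam/2 < a) (hb : b < lam/2)
    (F : ℝ → ℝ) (hF : ContDiffOn ℝ 1 F (Set.Icc (-lam/2) (lam/2)))
    (K : ℝ) (hK : ∀ t ∈ Set.Icc (-lam/2) (lam/2), |deriv F t| ≤ K)
    (hInt : ∀ y ∈ Set.Icc a b, ∀ ε ∈ Set.Ioo (0:ℝ) 1,
      MeasureTheory.IntegrableOn (fun t => (y + t) ^ (q-2) * |deriv F t|)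
        (Set.Icc (-y + ε) (lam/2)) MeasureTheory.volume) :
    ContinuousOn (fun z => ∫ t in (-z)..(lam/2), q * (z + t) ^ (q-1) * deriv F t)
        (Set.Ioo a b) ∧
    ∃ C > (0:ℝ), ∃ ε₀ > (0:ℝ), ∀ x y : ℝ, a ≤ x → x < y → y ≤ b → y - x ≤ ε₀ →
      |(∫ t in (-x)..(lam/2), q * (x + t) ^ (q-1) * deriv F t)
        - ∫ t in (-y)..(lam/2), q * (y + t) ^ (q-1) * deriv F t|
        ≤ C * |x - y| ^ (q/2) := by
  have hq2 : (-1:ℝ) < q - 1 := by linarith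
  have hK0 : 0 ≤ K := le_trans (abs_nonneg _) (hK 0 ⟨by linarith, by linarith⟩)
  -- antiderivative computation
  have hcomp : ∀ z u v : ℝ, (∫ t in u..v, (z + t) ^ (q-1)) = ((z+v)^q - (z+u)^q) / q := by
    intro z u v
    have h1 : (∫ t in u..v, (z + t) ^ (q-1)) = ∫ s in (z+u)..(z+v), s ^ (q-1) :=
      intervalIntegral.integral_comp_add_left (fun s => s ^ (q-1)) z
    rw [h1, integral_rpow (Or.inl hq2), show q - 1 + 1 = q by ring]
  -- integrability of the rpow factor
  have hrpowInt : ∀ z u v : ℝ, IntervalIntegrable (fun t => (z + t) ^ (q-1))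
      MeasureTheory.volume u v := by
    intro z u v
    have h1 : IntervalIntegrable (fun s : ℝ => s ^ (q-1)) MeasureTheory.volume (u + z) (v + z) :=
      intervalIntegral.intervalIntegrable_rpow' hq2
    have h2 := h1.comp_add_right z
    simp only [add_sub_cancel_right] at h2
    have he : (fun t : ℝ => (z + t) ^ (q-1)) = fun t => (t + z) ^ (q-1) := by
      funext t; rw [add_comm]
    rw [he]; exact h2
  -- integrability of the full integrand
  have hInteg : ∀ z u v : ℝ, u ≤ v → -z ≤ u → -lam/2 ≤ u → v ≤ lam/2 →
      IntervalIntegrable (fun t => q * (z + t) ^ (q-1) * deriv F t)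
        MeasureTheory.volume u v := by
    intro z u v huv hzu hul hvl
    have hg : IntervalIntegrable (fun t => (q*K) * (z + t) ^ (q-1))
        MeasureTheory.volume u v := (hrpowInt z u v).const_mul _
    have hm : MeasureTheory.AEStronglyMeasurable (fun t => q * (z + t) ^ (q-1) * deriv F t)
        (MeasureTheory.volume.restrict (Set.uIoc u v)) := by
      have hc : ContinuousOn (fun t : ℝ => q * (z + t) ^ (q-1)) (Set.uIoc u v) := by
        intro t ht
        rw [Set.uIoc_of_le huv] at ht
        have h0 : z + t ≠ 0 := by have := ht.1; intro h; linarith [ht.1]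
        have hca : ContinuousAt (fun t : ℝ => q * (z + t) ^ (q-1)) t :=
          continuousAt_const.mul
            (((continuous_const.add continuous_id).continuousAt).rpow_const (Or.inl h0))
        exact hca.continuousWithinAt
      exact (hc.aestronglyMeasurable measurableSet_uIoc).mul
        ((measurable_deriv F).aestronglyMeasurable.restrict)
    refine hg.mono_fun hm ?_
    filter_upwards [MeasureTheory.ae_restrict_mem measurableSet_uIoc] with t ht
    rw [Set.uIoc_of_le huv] at ht
    have h1 : 0 < z + t := by linarith [ht.1]
    have h2 : |deriv F t| ≤ K := hK t ⟨by linarith [ht.1], le_trans ht.2 hvl⟩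
    have h3 : (0:ℝ) ≤ (z+t) ^ (q-1) := Real.rpow_nonneg h1.le _
    simp only [norm_mul, Real.norm_eq_abs]
    calc |q| * |(z+t)^(q-1)| * |deriv F t| = q * (z+t)^(q-1) * |deriv F t| := by
          rw [abs_of_pos hq0, abs_of_nonneg h3]
      _ ≤ q * (z+t)^(q-1) * K := by
          apply mul_le_mul_of_nonneg_left h2 (by positivity)
      _ = |q| * |K| * |(z+t)^(q-1)| := by
          rw [abs_of_pos hq0, abs_of_nonneg hK0, abs_of_nonneg h3]; ring
  set G := fun z => ∫ t in (-z)..(lam/2), q * (z + t) ^ (q-1) * deriv F t with hG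
  have hε₀ : (0:ℝ) < min 1 ((lam/2 + a)^2) := lt_min one_pos (pow_pos (by linarith) 2)
  have key : ∀ x y : ℝ, a ≤ x → x < y → y ≤ b → y - x ≤ min 1 ((lam/2 + a)^2) →
      |G x - G y| ≤ (4*K+1) * |x - y| ^ (q/2) := by
    intro x y hax hxy hyb hsmall
    have hxy0 : 0 < y - x := by linarith
    set ε := Real.sqrt (y - x) with hε
    have hε0 : 0 < ε := Real.sqrt_pos.mpr hxy0
    have hεsq : ε ^ 2 = y - x := Real.sq_sqrt hxy0.le
    have hε1 : ε ≤ 1 := by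
      rw [show (1:ℝ) = Real.sqrt 1 by rw [Real.sqrt_one]]
      exact Real.sqrt_le_sqrt (le_trans hsmall (min_le_left _ _))
    have hεlam : ε ≤ lam/2 + x := by
      have h1 : ε ≤ Real.sqrt ((lam/2 + a)^2) :=
        Real.sqrt_le_sqrt (le_trans hsmall (min_le_right _ _))
      rw [Real.sqrt_sq (by linarith)] at h1
      linarith
    set c := -x + ε with hc
    have hxlam : -lam/2 ≤ -x := by linarith
    have hylam : -lam/2 ≤ -y := by linarith
    have hclam : c ≤ lam/2 := by rw [hc]; linarith
    have hxc : -x ≤ c := by rw [hc]; linarith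
    have hyc : -y ≤ c := by rw [hc]; linarith
    have I1 : IntervalIntegrable (fun t => q * (x + t) ^ (q-1) * deriv F t)
        MeasureTheory.volume (-x) c := hInteg x (-x) c hxc le_rfl hxlam hclam
    have I2 : IntervalIntegrable (fun t => q * (x + t) ^ (q-1) * deriv F t)
        MeasureTheory.volume c (lam/2) := hInteg x c (lam/2) hclam hxc (le_trans hxlam hxc) le_rfl
    have I3 : IntervalIntegrable (fun t => q * (y + t) ^ (q-1) * deriv F t)
        MeasureTheory.volume (-y) c := hInteg y (-y) c hyc le_rfl hylam hclam
    have I4 : IntervalIntegrable (fun t => q * (y + t) ^ (q-1) * deriv F t)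
        MeasureTheory.volume c (lam/2) := hInteg y c (lam/2) hclam hyc (le_trans hylam hyc) le_rfl
    have Sx : G x = (∫ t in (-x)..c, q * (x + t) ^ (q-1) * deriv F t)
        + ∫ t in c..(lam/2), q * (x + t) ^ (q-1) * deriv F t :=
      (intervalIntegral.integral_add_adjacent_intervals I1 I2).symm
    have Sy : G y = (∫ t in (-y)..c, q * (y + t) ^ (q-1) * deriv F t)
        + ∫ t in c..(lam/2), q * (y + t) ^ (q-1) * deriv F t :=
      (intervalIntegral.integral_add_adjacent_intervals I3 I4).symm
    -- near-pole bound
    have hnear : ∀ z u : ℝ, -z ≤ u → -lam/2 ≤ u → u ≤ c →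
        |∫ t in u..c, q * (z + t) ^ (q-1) * deriv F t| ≤ K * ((z+c)^q - (z+u)^q) := by
      intro z u hzu hu huc
      have hgval : (∫ t in u..c, (q*K) * (z + t) ^ (q-1)) = K * ((z+c)^q - (z+u)^q) := by
        rw [intervalIntegral.integral_const_mul, hcomp]
        field_simp
      have hmono : (z+u)^q ≤ (z+c)^q := Real.rpow_le_rpow (by linarith) (by linarith) hq0.le
      calc |∫ t in u..c, q * (z + t) ^ (q-1) * deriv F t|
          = ‖∫ t in u..c, q * (z + t) ^ (q-1) * deriv F t‖ := (Real.norm_eq_abs _).symm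
        _ ≤ |∫ t in u..c, (q*K) * (z + t) ^ (q-1)| := by
            apply intervalIntegral.norm_integral_le_abs_of_norm_le ?_ ((hrpowInt z u c).const_mul (q*K))
            filter_upwards [MeasureTheory.ae_restrict_mem measurableSet_uIoc] with t ht
            rw [Set.uIoc_of_le huc] at ht
            have h1 : 0 < z + t := by linarith [ht.1]
            have h2 : |deriv F t| ≤ K := hK t ⟨by linarith [ht.1], le_trans ht.2 hclam⟩
            have h3 : (0:ℝ) ≤ (z+t)^(q-1) := Real.rpow_nonneg h1.le _
            rw [norm_mul, norm_mul, Real.norm_eq_abs, Real.norm_eq_abs, Real.norm_eq_abs,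
              abs_of_pos hq0, abs_of_nonneg h3]
            calc q * (z+t)^(q-1) * |deriv F t| ≤ q * (z+t)^(q-1) * K :=
                  mul_le_mul_of_nonneg_left h2 (by positivity)
              _ = q*K*(z+t)^(q-1) := by ring
        _ = K * ((z+c)^q - (z+u)^q) := by
            rw [hgval, abs_of_nonneg (mul_nonneg hK0 (by linarith))]
    have hA : |∫ t in (-x)..c, q * (x + t) ^ (q-1) * deriv F t| ≤ K * ε ^ q := by
      have h := hnear x (-x) le_rfl hxlam hxc
      rw [show x + c = ε by rw [hc]; ring, show x + -x = 0 by ring,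
        Real.zero_rpow hq0.ne'] at h
      simpa using h
    have hB : |∫ t in (-y)..c, q * (y + t) ^ (q-1) * deriv F t| ≤ 2 * K * ε ^ q := by
      have h := hnear y (-y) le_rfl hylam hyc
      rw [show y + -y = 0 by ring, Real.zero_rpow hq0.ne'] at h
      have h1 : (y+c)^q ≤ (2*ε)^q := by
        apply Real.rpow_le_rpow (by rw [hc]; nlinarith) (by rw [hc]; nlinarith) hq0.le
      have h2 : (2*ε)^q ≤ 2*ε^q := by
        rw [Real.mul_rpow (by norm_num) hε0.le]
        have h3 : (2:ℝ)^q ≤ 2 := by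
          calc (2:ℝ)^q ≤ (2:ℝ)^(1:ℝ) := Real.rpow_le_rpow_of_exponent_le one_le_two hq1.le
            _ = 2 := Real.rpow_one 2
        exact mul_le_mul_of_nonneg_right h3 (Real.rpow_nonneg hε0.le q)
      calc |∫ t in (-y)..c, q * (y + t) ^ (q-1) * deriv F t| ≤ K * ((y+c)^q - 0) := h
        _ ≤ K * (2*ε^q) := by
            rw [sub_zero]; exact mul_le_mul_of_nonneg_left (le_trans h1 h2) hK0
        _ = 2 * K * ε ^ q := by ring
    -- far bound
    have hD : |∫ t in c..(lam/2),
        (q * (x + t) ^ (q-1) * deriv F t - q * (y + t) ^ (q-1) * deriv F t)|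
        ≤ q * K * ε ^ (q+1) := by
      have hεx : ε = x + c := by rw [hc]; ring
      have hIh : IntervalIntegrable (fun t => (q*K*(1-q)*(y-x)) * (x + t) ^ (q-2))
          MeasureTheory.volume c (lam/2) := by
        apply ContinuousOn.intervalIntegrable
        intro t ht
        rw [Set.uIcc_of_le hclam] at ht
        have h0 : x + t ≠ 0 := by
          have := ht.1
          have : ε ≤ x + t := by rw [hεx]; linarith
          intro hcon; rw [hcon] at this; linarith
        have hca : ContinuousAt (fun t : ℝ => (q*K*(1-q)*(y-x)) * (x + t) ^ (q-2)) t :=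
          continuousAt_const.mul
            (((continuous_const.add continuous_id).continuousAt).rpow_const (Or.inl h0))
        exact hca.continuousWithinAt
      have hval : (∫ t in c..(lam/2), (x + t) ^ (q-2))
          = ((x+lam/2)^(q-1) - ε^(q-1)) / (q-1) := by
        have h1 : (∫ t in c..(lam/2), (x + t) ^ (q-2))
            = ∫ s in (x+c)..(x+lam/2), s ^ (q-2) :=
          intervalIntegral.integral_comp_add_left (fun s => s ^ (q-2)) x
        rw [h1, integral_rpow (Or.inr ⟨by intro hcon; linarith [hcon],
          Set.notMem_uIcc_of_lt (by rw [← hεx]; exact hε0) (by linarith)⟩)]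
        rw [show q - 2 + 1 = q - 1 by ring, ← hεx]
      have hptw : ∀ᵐ t ∂(MeasureTheory.volume.restrict (Set.uIoc c (lam/2))),
          ‖q * (x + t) ^ (q-1) * deriv F t - q * (y + t) ^ (q-1) * deriv F t‖
          ≤ (q*K*(1-q)*(y-x)) * (x + t) ^ (q-2) := by
        filter_upwards [MeasureTheory.ae_restrict_mem measurableSet_uIoc] with t ht
        rw [Set.uIoc_of_le hclam] at ht
        have hu : 0 < x + t := by
          have : ε ≤ x + t := by rw [hεx]; linarith [ht.1]
          linarith [ht.1, hεx, hε0]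
        have huv : x + t ≤ y + t := by linarith
        obtain ⟨hm1, hm2⟩ := stmt15_mvt hq1 hu huv
        have hFK : |deriv F t| ≤ K := hK t ⟨by linarith [ht.1, hε0], ht.2⟩
        have heq : q * (x + t) ^ (q-1) * deriv F t - q * (y + t) ^ (q-1) * deriv F t
            = q * ((x+t)^(q-1) - (y+t)^(q-1)) * deriv F t := by ring
        rw [heq, Real.norm_eq_abs, abs_mul, abs_mul, abs_of_pos hq0, abs_of_nonneg hm2]
        have hvu : y + t - (x + t) = y - x := by ring
        rw [hvu] at hm1
        calc q * ((x+t)^(q-1) - (y+t)^(q-1)) * |deriv F t|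
            ≤ q * ((1-q) * (x+t)^(q-2) * (y-x)) * K := by
              apply mul_le_mul (mul_le_mul_of_nonneg_left hm1 hq0.le) hFK (abs_nonneg _)
              exact mul_nonneg hq0.le (mul_nonneg (mul_nonneg (by linarith)
                (Real.rpow_nonneg hu.le _)) (by linarith))
          _ = (q*K*(1-q)*(y-x)) * (x + t) ^ (q-2) := by ring
      calc |∫ t in c..(lam/2),
            (q * (x + t) ^ (q-1) * deriv F t - q * (y + t) ^ (q-1) * deriv F t)|
          = ‖∫ t in c..(lam/2),
            (q * (x + t) ^ (q-1) * deriv F t - q * (y + t) ^ (q-1) * deriv F t)‖ :=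
            (Real.norm_eq_abs _).symm
        _ ≤ |∫ t in c..(lam/2), (q*K*(1-q)*(y-x)) * (x + t) ^ (q-2)| :=
            intervalIntegral.norm_integral_le_abs_of_norm_le hptw hIh
        _ = |(q*K*(1-q)*(y-x)) * (((x+lam/2)^(q-1) - ε^(q-1)) / (q-1))| := by
            rw [intervalIntegral.integral_const_mul, hval]
        _ ≤ q * K * ε ^ (q+1) := by
            have hmono2 : (x+lam/2)^(q-1) ≤ ε^(q-1) :=
              Real.rpow_le_rpow_of_nonpos hε0 (by linarith) (by linarith)
            have hnn : (0:ℝ) ≤ (q*K*(1-q)*(y-x)) * (((x+lam/2)^(q-1) - ε^(q-1)) / (q-1)) := by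
              apply mul_nonneg (mul_nonneg (mul_nonneg (mul_nonneg hq0.le hK0)
                (by linarith)) (by linarith))
              exact div_nonneg_iff.mpr (Or.inr ⟨by linarith, by linarith⟩)
            rw [abs_of_nonneg hnn]
            have hsplit : ε ^ (q+1) = (y - x) * ε^(q-1) := by
              rw [show q + 1 = 2 + (q-1) by ring, Real.rpow_add hε0, Real.rpow_two, hεsq]
            rw [hsplit]
            have hpos : (0:ℝ) ≤ (x+lam/2)^(q-1) := Real.rpow_nonneg (by linarith) _
            have heq2 : ((x+lam/2)^(q-1) - ε^(q-1)) / (q-1)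
                = (ε^(q-1) - (x+lam/2)^(q-1)) / (1-q) := by
              rw [div_eq_div_iff (by linarith) (by linarith)]; ring
            have hfin : (((x+lam/2)^(q-1) - ε^(q-1)) / (q-1)) ≤ ε^(q-1)/(1-q) := by
              rw [heq2]
              gcongr
              · linarith
            have hMnn : (0:ℝ) ≤ q*K*(1-q)*(y-x) := mul_nonneg (mul_nonneg
              (mul_nonneg hq0.le hK0) (by linarith)) (by linarith)
            calc (q*K*(1-q)*(y-x)) * (((x+lam/2)^(q-1) - ε^(q-1)) / (q-1))
                ≤ (q*K*(1-q)*(y-x)) * (ε^(q-1)/(1-q)) :=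
                  mul_le_mul_of_nonneg_left hfin hMnn
              _ = q * K * ((y-x) * ε^(q-1)) := by
                  have h1q : (1:ℝ) - q ≠ 0 := by linarith
                  field_simp
    -- assemble
    have hsub : (∫ t in c..(lam/2), q * (x + t) ^ (q-1) * deriv F t)
        - (∫ t in c..(lam/2), q * (y + t) ^ (q-1) * deriv F t)
        = ∫ t in c..(lam/2),
          (q * (x + t) ^ (q-1) * deriv F t - q * (y + t) ^ (q-1) * deriv F t) :=
      (intervalIntegral.integral_sub I2 I4).symm
    have hεq : ε ^ (q+1) ≤ ε ^ q :=
      Real.rpow_le_rpow_of_exponent_ge hε0 hε1 (by linarith)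
    have htot : |G x - G y| ≤ (4*K+1) * ε ^ q := by
      have h1 : G x - G y = (∫ t in (-x)..c, q * (x + t) ^ (q-1) * deriv F t)
          - (∫ t in (-y)..c, q * (y + t) ^ (q-1) * deriv F t)
          + ∫ t in c..(lam/2),
            (q * (x + t) ^ (q-1) * deriv F t - q * (y + t) ^ (q-1) * deriv F t) := by
        rw [Sx, Sy, ← hsub]; ring
      rw [h1]
      have htri := abs_add_le ((∫ t in (-x)..c, q * (x + t) ^ (q-1) * deriv F t)
          - (∫ t in (-y)..c, q * (y + t) ^ (q-1) * deriv F t))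
          (∫ t in c..(lam/2),
            (q * (x + t) ^ (q-1) * deriv F t - q * (y + t) ^ (q-1) * deriv F t))
      have htri2 := abs_sub (∫ t in (-x)..c, q * (x + t) ^ (q-1) * deriv F t)
          (∫ t in (-y)..c, q * (y + t) ^ (q-1) * deriv F t)
      have hεqnn : (0:ℝ) ≤ ε ^ q := Real.rpow_nonneg hε0.le q
      have hD2 : |∫ t in c..(lam/2),
          (q * (x + t) ^ (q-1) * deriv F t - q * (y + t) ^ (q-1) * deriv F t)|
          ≤ q * K * ε ^ q :=
        le_trans hD (mul_le_mul_of_nonneg_left hεq (mul_nonneg hq0.le hK0))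
      nlinarith [mul_nonneg (mul_nonneg (sub_nonneg.mpr hq1.le) hK0) hεqnn]
    have hεfin : ε ^ q = |x - y| ^ (q/2) := by
      rw [abs_sub_comm, abs_of_pos hxy0, hε, Real.sqrt_eq_rpow,
        ← Real.rpow_mul hxy0.le, show 1/2*q = q/2 by ring]
    rw [← hεfin]; exact htot
  refine ⟨?_, 4*K+1, by linarith, min 1 ((lam/2 + a)^2), hε₀, key⟩
  -- continuity from the Hölder estimate
  intro z hz
  rw [Metric.continuousWithinAt_iff]
  intro δ hδ
  have hC : (0:ℝ) < 4*K+1 := by linarith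
  set η := min (min 1 ((lam/2+a)^2)) ((δ/(2*(4*K+1)))^(2/q)) with hη
  have hη0 : 0 < η := lt_min hε₀ (Real.rpow_pos_of_pos (by positivity) _)
  refine ⟨η, hη0, fun {w} hw hdist => ?_⟩
  rw [Real.dist_eq] at hdist
  have hηval : ((δ/(2*(4*K+1)))^(2/q))^(q/2) = δ/(2*(4*K+1)) := by
    rw [← Real.rpow_mul (by positivity), show 2/q*(q/2) = 1 by field_simp, Real.rpow_one]
  have hηb : η ^ (q/2) ≤ δ/(2*(4*K+1)) := by
    rw [← hηval]
    exact Real.rpow_le_rpow hη0.le (min_le_right _ _) (by positivity)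
  have hbound : |G w - G z| ≤ (4*K+1) * |w - z| ^ (q/2) := by
    rcases lt_trichotomy w z with h | h | h
    · have hzw : z - w ≤ min 1 ((lam/2+a)^2) := by
        have h1 : z - w ≤ |w - z| := by rw [abs_sub_comm]; exact le_abs_self _
        exact le_trans (le_trans h1 hdist.le) (min_le_left _ _)
      exact key w z hw.1.le h hz.2.le hzw
    · rw [h, sub_self, abs_zero]
      exact mul_nonneg hC.le (Real.rpow_nonneg (abs_nonneg _) _)
    · have hzw : w - z ≤ min 1 ((lam/2+a)^2) :=
        le_trans (le_trans (le_abs_self _) hdist.le) (min_le_left _ _)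
      have h2 := key z w hz.1.le h hw.2.le hzw
      rw [abs_sub_comm (G z) (G w), abs_sub_comm z w] at h2
      exact h2
  calc dist (G w) (G z) = |G w - G z| := Real.dist_eq _ _
    _ ≤ (4*K+1) * |w - z| ^ (q/2) := hbound
    _ ≤ (4*K+1) * η ^ (q/2) := by
        apply mul_le_mul_of_nonneg_left _ hC.le
        exact Real.rpow_le_rpow (abs_nonneg _) hdist.le (by positivity)
    _ ≤ (4*K+1) * (δ/(2*(4*K+1))) := mul_le_mul_of_nonneg_left hηb hC.le
    _ = δ/2 := by field_simp
    _ < δ := by linarith
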